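/- arXiv:1511.00743 — 2 statements merged into one kernel-verified Lean document; each statement's English description precedes it below -/
import Mathlib

section
/- Let d > 0, γ > 0, μ > 0 and a ∈ ℝ² with ln(1+μ) > γ + |a|²/(4d), and set L*(a) := π·√(2d)/√(ln(1+μ) − γ − |a|²/(4d)). Let Ω = (0,L) × (0,L) ⊂ ℝ² with 0 < L < L*(a). Then every solution of the impulsive reaction–diffusion system on Ω with f(u) = −γ·u and g(N) = (1+μ)·N/(1+μ·N) satisfies lim_{m→∞} N_m(x) = 0 for every x ∈ Ω. -/
open Real Filter MeasureTheory
open scoped Topology ENNReal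

noncomputable section

/-- First-order partial derivative of `u` in the `i`-th coordinate direction. -/
def pd {n : ℕ} (u : EuclideanSpace ℝ (Fin n) → ℝ) (i : Fin n)
    (x : EuclideanSpace ℝ (Fin n)) : ℝ :=
  fderiv ℝ u x (EuclideanSpace.single i 1)

/-- Second-order partial derivative `∂ᵢ∂ⱼ u`. -/
def pd2 {n : ℕ} (u : EuclideanSpace ℝ (Fin n) → ℝ) (i j : Fin n)
    (x : EuclideanSpace ℝ (Fin n)) : ℝ :=
  pd (fun y => pd u j y) i x

/-- Laplacian of `u`. -/
def lap {n : ℕ} (u : EuclideanSpace ℝ (Fin n) → ℝ) (x : EuclideanSpace ℝ (Fin n)) : ℝ :=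
  ∑ i, pd2 u i i x

/-- A solution of the impulsive reaction-diffusion system
`∂ₜ u⁽ᵐ⁾ = d Δu⁽ᵐ⁾ - a ⬝ ∇u⁽ᵐ⁾ + f (u⁽ᵐ⁾)` on `Ω × (0,1]` with hostile (Dirichlet) boundary
conditions, initial data `u⁽ᵐ⁾(·,0) = g (N_m ·)` and update rule `N_{m+1} = u⁽ᵐ⁾(·,1)`. -/
structure ImpSol (n : ℕ) (Ω : Set (EuclideanSpace ℝ (Fin n))) (d : ℝ)
    (a : EuclideanSpace ℝ (Fin n) → EuclideanSpace ℝ (Fin n)) (f g : ℝ → ℝ) where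
  N : ℕ → EuclideanSpace ℝ (Fin n) → ℝ
  u : ℕ → EuclideanSpace ℝ (Fin n) → ℝ → ℝ
  N_cont : ∀ m, ContinuousOn (N m) (closure Ω)
  N_nonneg : ∀ m, ∀ x ∈ closure Ω, 0 ≤ N m x
  N0_bdry : ∀ x ∈ frontier Ω, N 0 x = 0
  u_nonneg : ∀ m, ∀ x ∈ closure Ω, ∀ t ∈ Set.Icc (0:ℝ) 1, 0 ≤ u m x t
  u_cont : ∀ m, ContinuousOn (fun p : EuclideanSpace ℝ (Fin n) × ℝ => u m p.1 p.2)
    (closure Ω ×ˢ Set.Icc (0:ℝ) 1)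
  u_space_C2 : ∀ m, ∀ t ∈ Set.Ioc (0:ℝ) 1, ∀ x ∈ Ω, ContDiffAt ℝ 2 (fun y => u m y t) x
  u_time_C1 : ∀ m, ∀ x ∈ Ω, ∀ t ∈ Set.Ioc (0:ℝ) 1, ContDiffAt ℝ 1 (fun s => u m x s) t
  pde : ∀ m, ∀ x ∈ Ω, ∀ t ∈ Set.Ioc (0:ℝ) 1,
    deriv (fun s => u m x s) t =
      d * lap (fun y => u m y t) x - (∑ i, a x i * pd (fun y => u m y t) i x) + f (u m x t)
  bdry : ∀ m, ∀ x ∈ frontier Ω, ∀ t ∈ Set.Ioc (0:ℝ) 1, u m x t = 0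
  init : ∀ m, ∀ x ∈ Ω, u m x 0 = g (N m x)
  recur : ∀ m, ∀ x ∈ closure Ω, N (m + 1) x = u m x 1

/-! ### Auxiliary one-dimensional calculus lemmas -/

lemma deriv_nonneg_of_isMaxOn (f : ℝ → ℝ) (t₀ f' : ℝ) (ht : 0 < t₀)
    (hd : HasDerivAt f f' t₀) (hmax : ∀ s ∈ Set.Icc 0 t₀, f s ≤ f t₀) : 0 ≤ f' := by
  have hseg : segment ℝ t₀ 0 ⊆ Set.Icc 0 t₀ := by
    rw [segment_symm, segment_eq_Icc ht.le]
  have hcone : (0 : ℝ) - t₀ ∈ posTangentConeAt (Set.Icc 0 t₀) t₀ :=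
    sub_mem_posTangentConeAt_of_segment_subset hseg
  have hlm : IsLocalMaxOn f (Set.Icc 0 t₀) t₀ :=
    eventually_mem_nhdsWithin.mono fun s hs => hmax s hs
  have h := hlm.hasFDerivWithinAt_nonpos hd.hasFDerivAt.hasFDerivWithinAt hcone
  simp only [ContinuousLinearMap.smulRight_apply, ContinuousLinearMap.one_apply,
    zero_sub, neg_smul, smul_eq_mul, one_mul, ContinuousLinearMap.toSpanSingleton_apply] at h
  nlinarith

lemma second_deriv_test_max (f : ℝ → ℝ) (x₀ f'' : ℝ)
    (hf : ∀ᶠ y in 𝓝 x₀, DifferentiableAt ℝ f y)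
    (hf'' : HasDerivAt (deriv f) f'' x₀) (hmax : IsLocalMax f x₀) : f'' ≤ 0 := by
  by_contra hcon
  push_neg at hcon
  have h0 : deriv f x₀ = 0 := hmax.deriv_eq_zero
  have hslope : Tendsto (slope (deriv f) x₀) (𝓝[>] x₀) (𝓝 f'') := by
    have h1 := hasDerivWithinAt_iff_tendsto_slope.mp (hf''.hasDerivWithinAt (s := Set.Ioi x₀))
    rwa [Set.diff_singleton_eq_self (by simp)] at h1
  have h1 : ∀ᶠ t in 𝓝[>] x₀, 0 < deriv f t := by
    filter_upwards [hslope.eventually (eventually_gt_nhds hcon), self_mem_nhdsWithin]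
      with t hslt htm
    rw [slope_def_field, h0, sub_zero] at hslt
    have h2 : (0:ℝ) < t - x₀ := sub_pos.2 htm
    have := mul_pos hslt h2
    rwa [div_mul_cancel₀ _ h2.ne'] at this
  obtain ⟨b, hb, hsub⟩ := mem_nhdsGT_iff_exists_Ioc_subset.mp
    (h1.and (hf.filter_mono nhdsWithin_le_nhds) : _ ∈ 𝓝[>] x₀)
  obtain ⟨t, htle, htIoc⟩ :=
    ((hmax.filter_mono nhdsWithin_le_nhds).and (Ioc_mem_nhdsGT_of_mem ⟨le_refl x₀, hb⟩)).exists
  have hcont : ContinuousOn f (Set.Icc x₀ t) := by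
    intro z hz
    rcases eq_or_lt_of_le hz.1 with h | h
    · exact (h ▸ hf.self_of_nhds).continuousAt.continuousWithinAt
    · exact ((hsub ⟨h, hz.2.trans htIoc.2⟩).2).continuousAt.continuousWithinAt
  have hderiv : ∀ z ∈ interior (Set.Icc x₀ t), 0 < deriv f z := by
    intro z hz
    rw [interior_Icc] at hz
    exact (hsub ⟨hz.1, hz.2.le.trans htIoc.2⟩).1
  have hmono := strictMonoOn_of_deriv_pos (convex_Icc x₀ t) hcont hderiv
  have := hmono (Set.left_mem_Icc.2 htIoc.1.le) (Set.right_mem_Icc.2 htIoc.1.le) htIoc.1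
  linarith

/-! ### Partial derivatives at an interior local maximum -/

lemma hasFDerivAt_pd {n : ℕ} (W : EuclideanSpace ℝ (Fin n) → ℝ)
    (x₀ : EuclideanSpace ℝ (Fin n)) (hW : ContDiffAt ℝ 2 W x₀) (i : Fin n) :
    HasFDerivAt (pd W i)
      ((ContinuousLinearMap.apply ℝ ℝ (EuclideanSpace.single i 1)).comp
        (fderiv ℝ (fderiv ℝ W) x₀)) x₀ := by
  have hD : DifferentiableAt ℝ (fderiv ℝ W) x₀ :=
    (hW.fderiv_right (m := 1) (by norm_num)).differentiableAt (by norm_num)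
  exact ((ContinuousLinearMap.apply ℝ ℝ (EuclideanSpace.single i 1)).hasFDerivAt).comp x₀
    hD.hasFDerivAt

lemma localmax_pd_pd2 {n : ℕ} (W : EuclideanSpace ℝ (Fin n) → ℝ)
    (x₀ : EuclideanSpace ℝ (Fin n)) (hW : ContDiffAt ℝ 2 W x₀) (hmax : IsLocalMax W x₀)
    (i : Fin n) : pd W i x₀ = 0 ∧ pd2 W i i x₀ ≤ 0 := by
  constructor
  · unfold pd
    rw [hmax.fderiv_eq_zero]
    simp
  · set e : EuclideanSpace ℝ (Fin n) := EuclideanSpace.single i 1 with he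
    set ℓ : ℝ → EuclideanSpace ℝ (Fin n) := fun s => x₀ + s • e with hℓ
    have hℓd : ∀ s : ℝ, HasDerivAt ℓ e s := by
      intro s
      simpa [hℓ] using ((hasDerivAt_id s).smul_const e).const_add x₀
    have hℓ0 : ℓ 0 = x₀ := by simp [hℓ]
    have hℓc : Tendsto ℓ (𝓝 0) (𝓝 x₀) := hℓ0 ▸ (hℓd 0).continuousAt.tendsto
    have hWd : ∀ᶠ y in 𝓝 x₀, DifferentiableAt ℝ W y :=
      (hW.eventually (by simp)).mono fun y hy => hy.differentiableAt (by norm_num)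
    set g : ℝ → ℝ := fun s => W (ℓ s) with hg
    have hgd : ∀ᶠ s in 𝓝 0, HasDerivAt g (pd W i (ℓ s)) s := by
      filter_upwards [hℓc.eventually hWd] with s hs
      have := hs.hasFDerivAt.comp_hasDerivAt s (hℓd s)
      exact this
    have hgd' : ∀ᶠ s in 𝓝 0, deriv g s = pd W i (ℓ s) := hgd.mono fun s hs => hs.deriv
    have h2 : HasDerivAt (fun s => pd W i (ℓ s)) (fderiv ℝ (fderiv ℝ W) x₀ e e) 0 := by
      have := (hasFDerivAt_pd W x₀ hW i).comp_hasDerivAt_of_eq 0 (hℓd 0) hℓ0.symm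
      exact this
    have h2' : HasDerivAt (deriv g) (fderiv ℝ (fderiv ℝ W) x₀ e e) 0 :=
      h2.congr_of_eventuallyEq hgd'
    have hgmax : IsLocalMax g 0 := by
      show ∀ᶠ s in 𝓝 0, g s ≤ g 0
      refine (hℓc.eventually hmax).mono fun s hs => ?_
      simpa [hg, hℓ0] using hs
    have hkey := second_deriv_test_max g 0 _
      (hgd.mono fun s hs => hs.differentiableAt) h2' hgmax
    have heq : pd2 W i i x₀ = fderiv ℝ (fderiv ℝ W) x₀ e e := by
      calc pd2 W i i x₀ = fderiv ℝ (pd W i) x₀ e := rfl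
        _ = _ := by rw [(hasFDerivAt_pd W x₀ hW i).fderiv]; simp [he]
    rw [heq]
    exact hkey

/-! ### Linearity of partial derivatives -/

lemma pd_sub {n : ℕ} {f g : EuclideanSpace ℝ (Fin n) → ℝ} {x : EuclideanSpace ℝ (Fin n)}
    (hf : DifferentiableAt ℝ f x) (hg : DifferentiableAt ℝ g x) (i : Fin n) :
    pd (fun y => f y - g y) i x = pd f i x - pd g i x := by
  unfold pd
  rw [fderiv_fun_sub hf hg]
  simp

lemma pd2_sub {n : ℕ} {f g : EuclideanSpace ℝ (Fin n) → ℝ} {x : EuclideanSpace ℝ (Fin n)}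
    (hf : ContDiffAt ℝ 2 f x) (hg : ContDiffAt ℝ 2 g x) (i : Fin n) :
    pd2 (fun y => f y - g y) i i x = pd2 f i i x - pd2 g i i x := by
  have hev : (fun y => pd (fun z => f z - g z) i y) =ᶠ[𝓝 x] fun y => pd f i y - pd g i y := by
    filter_upwards [hf.eventually (by simp), hg.eventually (by simp)] with y hfy hgy
    exact pd_sub (hfy.differentiableAt (by norm_num)) (hgy.differentiableAt (by norm_num)) i
  have hdf : DifferentiableAt ℝ (pd f i) x := (hasFDerivAt_pd f x hf i).differentiableAt
  have hdg : DifferentiableAt ℝ (pd g i) x := (hasFDerivAt_pd g x hg i).differentiableAt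
  calc pd2 (fun y => f y - g y) i i x
      = fderiv ℝ (fun y => pd (fun z => f z - g z) i y) x (EuclideanSpace.single i 1) := rfl
    _ = fderiv ℝ (fun y => pd f i y - pd g i y) x (EuclideanSpace.single i 1) := by
        rw [hev.fderiv_eq]
    _ = pd2 f i i x - pd2 g i i x := by
        rw [fderiv_fun_sub hdf hdg]; simp only [ContinuousLinearMap.sub_apply]; rfl

/-! ### The parabolic comparison (maximum) principle -/

lemma max_principle {n : ℕ} {Ω : Set (EuclideanSpace ℝ (Fin n))} (hΩo : IsOpen Ω)
    (hΩc : IsCompact (closure Ω)) {d γ : ℝ} (hd : 0 < d) (hγ : 0 < γ)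
    (a : EuclideanSpace ℝ (Fin n))
    (u v : EuclideanSpace ℝ (Fin n) → ℝ → ℝ)
    (hu_cont : ContinuousOn (fun p : EuclideanSpace ℝ (Fin n) × ℝ => u p.1 p.2)
      (closure Ω ×ˢ Set.Icc (0:ℝ) 1))
    (hu_C2 : ∀ t ∈ Set.Ioc (0:ℝ) 1, ∀ x ∈ Ω, ContDiffAt ℝ 2 (fun y => u y t) x)
    (hu_C1 : ∀ x ∈ Ω, ∀ t ∈ Set.Ioc (0:ℝ) 1, ContDiffAt ℝ 1 (fun s => u x s) t)
    (hpde : ∀ x ∈ Ω, ∀ t ∈ Set.Ioc (0:ℝ) 1, deriv (fun s => u x s) t =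
      d * lap (fun y => u y t) x - (∑ i, a i * pd (fun y => u y t) i x) + (-γ * u x t))
    (hv_cont : Continuous (fun p : EuclideanSpace ℝ (Fin n) × ℝ => v p.1 p.2))
    (hv_C2 : ∀ (t : ℝ), ∀ x, ContDiffAt ℝ 2 (fun y => v y t) x)
    (hv_C1 : ∀ (x) (t : ℝ), DifferentiableAt ℝ (fun s => v x s) t)
    (hvpde : ∀ (x) (t : ℝ), deriv (fun s => v x s) t =
      d * lap (fun y => v y t) x - (∑ i, a i * pd (fun y => v y t) i x) + (-γ * v x t))
    (hinit : ∀ x ∈ Ω, u x 0 ≤ v x 0)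
    (hbdry : ∀ x ∈ frontier Ω, ∀ t ∈ Set.Ioc (0:ℝ) 1, u x t ≤ v x t) :
    ∀ x ∈ closure Ω, ∀ t ∈ Set.Icc (0:ℝ) 1, u x t ≤ v x t := by
  intro x hx t ht
  by_contra hlt
  push_neg at hlt
  set ε : ℝ := (u x t - v x t) / 2 with hε
  have hε0 : 0 < ε := by simp only [hε]; linarith
  set K := closure Ω ×ˢ Set.Icc (0:ℝ) 1 with hK
  have hKc : IsCompact K := hΩc.prod isCompact_Icc
  have hKne : K.Nonempty := ⟨(x, t), hx, ht⟩
  set W : EuclideanSpace ℝ (Fin n) × ℝ → ℝ := fun p => u p.1 p.2 - v p.1 p.2 - ε * p.2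
    with hWdef
  have hWcont : ContinuousOn W K := by
    apply ContinuousOn.sub (hu_cont.sub hv_cont.continuousOn)
    exact (continuous_const.mul continuous_snd).continuousOn
  obtain ⟨p₀, hp₀K, hp₀max⟩ := hKc.exists_isMaxOn hKne hWcont
  obtain ⟨x₀, t₀⟩ := p₀
  have hmaxW : ∀ q ∈ K, W q ≤ W (x₀, t₀) := isMaxOn_iff.mp hp₀max
  have hx₀ : x₀ ∈ closure Ω := hp₀K.1
  have ht₀ : t₀ ∈ Set.Icc (0:ℝ) 1 := hp₀K.2
  have hWx : ε ≤ W (x, t) := by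
    simp only [hWdef]
    have : ε * t ≤ ε := by nlinarith [ht.1, ht.2]
    simp only [hε] at *
    linarith
  have hMpos : 0 < W (x₀, t₀) := lt_of_lt_of_le hε0 (hWx.trans (hmaxW (x,t) ⟨hx, ht⟩))
  have w0 : ∀ y ∈ closure Ω, u y 0 - v y 0 ≤ 0 := by
    intro y hy
    haveI hne : (𝓝[Ω] y).NeBot := mem_closure_iff_nhdsWithin_neBot.mp hy
    have h1 : ContinuousOn (fun z => u z 0 - v z 0) (closure Ω) := by
      have hc2 : Continuous (fun z : EuclideanSpace ℝ (Fin n) => (z, (0:ℝ))) := by continuity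
      exact (hu_cont.sub hv_cont.continuousOn).comp hc2.continuousOn
        (fun z hz => ⟨hz, by norm_num, by norm_num⟩)
    have hcy : ContinuousWithinAt (fun z => u z 0 - v z 0) Ω y :=
      (h1 y hy).mono subset_closure
    exact le_of_tendsto hcy (eventually_nhdsWithin_of_forall fun z hz => sub_nonpos.2 (hinit z hz))
  have ht₀pos : 0 < t₀ := by
    rcases ht₀.1.eq_or_lt with h | h
    · exfalso
      have heq : W (x₀, t₀) = u x₀ 0 - v x₀ 0 := by
        simp only [hWdef, ← h]; ring
      have := w0 x₀ hx₀
      rw [heq] at hMpos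
      linarith
    · exact h
  have ht₀Ioc : t₀ ∈ Set.Ioc (0:ℝ) 1 := ⟨ht₀pos, ht₀.2⟩
  have hx₀Ω : x₀ ∈ Ω := by
    by_contra hno
    have hfr : x₀ ∈ frontier Ω := by
      have : x₀ ∈ closure Ω \ interior Ω := ⟨hx₀, by rwa [hΩo.interior_eq]⟩
      exact this
    have hb := hbdry x₀ hfr t₀ ht₀Ioc
    have hW0 : W (x₀, t₀) ≤ -(ε * t₀) := by
      simp only [hWdef]; linarith
    nlinarith [mul_pos hε0 ht₀pos]
  set U : EuclideanSpace ℝ (Fin n) → ℝ := fun y => u y t₀ - v y t₀ with hU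
  have hUC2 : ContDiffAt ℝ 2 U x₀ := (hu_C2 t₀ ht₀Ioc x₀ hx₀Ω).sub (hv_C2 t₀ x₀)
  have hUmax : IsLocalMax U x₀ := by
    filter_upwards [hΩo.mem_nhds hx₀Ω] with y hy
    have := hmaxW (y, t₀) ⟨subset_closure hy, ht₀⟩
    simp only [hWdef] at this
    simp only [hU]
    linarith
  have hkey := fun i => localmax_pd_pd2 U x₀ hUC2 hUmax i
  have hud : DifferentiableAt ℝ (fun y => u y t₀) x₀ :=
    (hu_C2 t₀ ht₀Ioc x₀ hx₀Ω).differentiableAt (by norm_num)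
  have hvd : DifferentiableAt ℝ (fun y => v y t₀) x₀ :=
    (hv_C2 t₀ x₀).differentiableAt (by norm_num)
  have hpd_eq : ∀ i, pd (fun y => u y t₀) i x₀ = pd (fun y => v y t₀) i x₀ := by
    intro i
    have h := (hkey i).1
    rw [hU, pd_sub hud hvd i] at h
    linarith
  have hlap_le : lap (fun y => u y t₀) x₀ ≤ lap (fun y => v y t₀) x₀ := by
    have h : ∀ i : Fin n, pd2 (fun y => u y t₀) i i x₀ ≤ pd2 (fun y => v y t₀) i i x₀ := by
      intro i
      have h := (hkey i).2
      rw [hU, pd2_sub (hu_C2 t₀ ht₀Ioc x₀ hx₀Ω) (hv_C2 t₀ x₀) i] at h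
      linarith
    exact Finset.sum_le_sum fun i _ => h i
  have hut : HasDerivAt (fun s => u x₀ s) (deriv (fun s => u x₀ s) t₀) t₀ :=
    ((hu_C1 x₀ hx₀Ω t₀ ht₀Ioc).differentiableAt (by norm_num)).hasDerivAt
  have hvt : HasDerivAt (fun s => v x₀ s) (deriv (fun s => v x₀ s) t₀) t₀ :=
    (hv_C1 x₀ t₀).hasDerivAt
  have hψ : HasDerivAt (fun s => u x₀ s - v x₀ s - ε * s)
      (deriv (fun s => u x₀ s) t₀ - deriv (fun s => v x₀ s) t₀ - ε) t₀ := by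
    have : HasDerivAt (fun s => u x₀ s - v x₀ s - ε * s) _ t₀ :=
      (hut.sub hvt).sub ((hasDerivAt_id t₀).const_mul ε)
    simpa using this
  have hψmax : ∀ s ∈ Set.Icc 0 t₀, u x₀ s - v x₀ s - ε * s ≤ u x₀ t₀ - v x₀ t₀ - ε * t₀ := by
    intro s hs
    exact hmaxW (x₀, s) ⟨hx₀, hs.1, hs.2.trans ht₀.2⟩
  have htime := deriv_nonneg_of_isMaxOn _ t₀ _ ht₀pos hψ hψmax
  have hu_eq := hpde x₀ hx₀Ω t₀ ht₀Ioc
  have hv_eq := hvpde x₀ t₀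
  have hsum_eq : (∑ i, a i * pd (fun y => u y t₀) i x₀)
      = ∑ i, a i * pd (fun y => v y t₀) i x₀ :=
    Finset.sum_congr rfl fun i _ => by rw [hpd_eq i]
  have hpos : 0 < u x₀ t₀ - v x₀ t₀ := by
    have heq : W (x₀, t₀) = u x₀ t₀ - v x₀ t₀ - ε * t₀ := rfl
    nlinarith [mul_pos hε0 ht₀pos]
  rw [hu_eq, hv_eq, hsum_eq] at htime
  nlinarith [mul_pos hγ hpos, mul_le_mul_of_nonneg_left hlap_le hd.le]

/-! ### The explicit supersolution -/

def Fk (κ q s : ℝ) : ℝ → ℝ := fun z => Real.exp (κ*z) * Real.sin (q*(z+s))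
def Gk (κ q s : ℝ) : ℝ → ℝ := fun z => Real.exp (κ*z) * Real.cos (q*(z+s))

lemma hasDerivAt_Fk (κ q s y : ℝ) :
    HasDerivAt (Fk κ q s) (κ * Fk κ q s y + q * Gk κ q s y) y := by
  have he : HasDerivAt (fun z : ℝ => Real.exp (κ*z)) (κ * Real.exp (κ*y)) y := by
    simpa [mul_comm] using ((hasDerivAt_id y).const_mul κ).exp
  have hs : HasDerivAt (fun z : ℝ => Real.sin (q*(z+s))) (q * Real.cos (q*(y+s))) y := by
    have h1 : HasDerivAt (fun z : ℝ => q*(z+s)) q y := by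
      simpa using ((hasDerivAt_id y).add_const s).const_mul q
    simpa [mul_comm] using h1.sin
  have : HasDerivAt (fun z : ℝ => Real.exp (κ*z) * Real.sin (q*(z+s))) _ y := he.mul hs
  unfold Fk Gk
  convert this using 1
  ring

lemma hasDerivAt_Gk (κ q s y : ℝ) :
    HasDerivAt (Gk κ q s) (κ * Gk κ q s y - q * Fk κ q s y) y := by
  have he : HasDerivAt (fun z : ℝ => Real.exp (κ*z)) (κ * Real.exp (κ*y)) y := by
    simpa [mul_comm] using ((hasDerivAt_id y).const_mul κ).exp
  have hs : HasDerivAt (fun z : ℝ => Real.cos (q*(z+s))) (-(q * Real.sin (q*(y+s)))) y := by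
    have h1 : HasDerivAt (fun z : ℝ => q*(z+s)) q y := by
      simpa using ((hasDerivAt_id y).add_const s).const_mul q
    simpa [mul_comm] using h1.cos
  have : HasDerivAt (fun z : ℝ => Real.exp (κ*z) * Real.cos (q*(z+s))) _ y := he.mul hs
  unfold Fk Gk
  convert this using 1
  ring

lemma Fk_diff (κ q s : ℝ) : Differentiable ℝ (Fk κ q s) :=
  fun y => (hasDerivAt_Fk κ q s y).differentiableAt

lemma Gk_diff (κ q s : ℝ) : Differentiable ℝ (Gk κ q s) :=
  fun y => (hasDerivAt_Gk κ q s y).differentiableAt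

lemma deriv_Fk (κ q s : ℝ) : deriv (Fk κ q s) = fun y => κ * Fk κ q s y + q * Gk κ q s y :=
  funext fun y => (hasDerivAt_Fk κ q s y).deriv

lemma Fk_contDiff (κ q s : ℝ) : ContDiff ℝ 2 (Fk κ q s) := by
  unfold Fk
  exact (Real.contDiff_exp.comp ((contDiff_const.mul contDiff_id))).mul
    (Real.contDiff_sin.comp (contDiff_const.mul (contDiff_id.add contDiff_const)))

lemma proj_hasFDerivAt (i : Fin 2) (x : EuclideanSpace ℝ (Fin 2)) :
    HasFDerivAt (fun y : EuclideanSpace ℝ (Fin 2) => y i)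
      (EuclideanSpace.proj (𝕜 := ℝ) i) x :=
  (EuclideanSpace.proj (𝕜 := ℝ) i).hasFDerivAt

lemma pd_prod (f g : ℝ → ℝ) (hf : Differentiable ℝ f) (hg : Differentiable ℝ g)
    (x : EuclideanSpace ℝ (Fin 2)) :
    pd (fun y => f (y 0) * g (y 1)) 0 x = deriv f (x 0) * g (x 1) ∧
    pd (fun y => f (y 0) * g (y 1)) 1 x = f (x 0) * deriv g (x 1) := by
  have hfc : HasFDerivAt (fun y : EuclideanSpace ℝ (Fin 2) => f (y 0))
      (deriv f (x 0) • (EuclideanSpace.proj (𝕜 := ℝ) (0 : Fin 2))) x :=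
    (hf (x 0)).hasDerivAt.comp_hasFDerivAt x (proj_hasFDerivAt 0 x)
  have hgc : HasFDerivAt (fun y : EuclideanSpace ℝ (Fin 2) => g (y 1))
      (deriv g (x 1) • (EuclideanSpace.proj (𝕜 := ℝ) (1 : Fin 2))) x :=
    (hg (x 1)).hasDerivAt.comp_hasFDerivAt x (proj_hasFDerivAt 1 x)
  have hmul := hfc.mul hgc
  constructor <;>
  · unfold pd
    rw [HasFDerivAt.fderiv (f := fun y : EuclideanSpace ℝ (Fin 2) => f (y 0) * g (y 1)) hmul]
    simp [EuclideanSpace.single_apply]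
    try ring

lemma lap_prod (f g : ℝ → ℝ) (hf : Differentiable ℝ f) (hg : Differentiable ℝ g)
    (hf' : Differentiable ℝ (deriv f)) (hg' : Differentiable ℝ (deriv g))
    (x : EuclideanSpace ℝ (Fin 2)) :
    lap (fun y => f (y 0) * g (y 1)) x
      = deriv (deriv f) (x 0) * g (x 1) + f (x 0) * deriv (deriv g) (x 1) := by
  have h00 : (fun y : EuclideanSpace ℝ (Fin 2) => pd (fun z => f (z 0) * g (z 1)) 0 y)
      = fun y => deriv f (y 0) * g (y 1) := funext fun y => (pd_prod f g hf hg y).1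
  have h11 : (fun y : EuclideanSpace ℝ (Fin 2) => pd (fun z => f (z 0) * g (z 1)) 1 y)
      = fun y => f (y 0) * deriv g (y 1) := funext fun y => (pd_prod f g hf hg y).2
  unfold lap
  rw [Fin.sum_univ_two]
  unfold pd2
  rw [h00, h11, (pd_prod (deriv f) g hf' hg x).1, (pd_prod f (deriv g) hf hg' x).2]

lemma vsuper_pde (d γ A q s κ₀ κ₁ β : ℝ)
    (a : EuclideanSpace ℝ (Fin 2)) (ha0 : a 0 = 2*d*κ₀) (ha1 : a 1 = 2*d*κ₁)
    (hβ : β = -γ - d*(κ₀^2 + κ₁^2) - 2*d*q^2)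
    (x : EuclideanSpace ℝ (Fin 2)) (t : ℝ) :
    deriv (fun τ => A * Real.exp (β*τ) * (Fk κ₀ q s (x 0) * Fk κ₁ q s (x 1))) t
      = d * lap (fun y => A * Real.exp (β*t) * (Fk κ₀ q s (y 0) * Fk κ₁ q s (y 1))) x
        - (∑ i, a i * pd (fun y => A * Real.exp (β*t) * (Fk κ₀ q s (y 0) * Fk κ₁ q s (y 1))) i x)
        + (-γ * (A * Real.exp (β*t) * (Fk κ₀ q s (x 0) * Fk κ₁ q s (x 1)))) := by
  set c := A * Real.exp (β*t) with hc
  have he : HasDerivAt (fun τ : ℝ => Real.exp (β*τ)) (β * Real.exp (β*t)) t := by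
    simpa [mul_comm] using ((hasDerivAt_id t).const_mul β).exp
  have ht : HasDerivAt (fun τ => A * Real.exp (β*τ) * (Fk κ₀ q s (x 0) * Fk κ₁ q s (x 1)))
      (A * (β * Real.exp (β*t)) * (Fk κ₀ q s (x 0) * Fk κ₁ q s (x 1))) t :=
    (he.const_mul A).mul_const _
  rw [ht.deriv]
  set f : ℝ → ℝ := fun z => c * Fk κ₀ q s z with hfdef
  set g : ℝ → ℝ := Fk κ₁ q s with hgdef
  have hfun : (fun y : EuclideanSpace ℝ (Fin 2) =>
      A * Real.exp (β*t) * (Fk κ₀ q s (y 0) * Fk κ₁ q s (y 1))) = fun y => f (y 0) * g (y 1) := by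
    funext y; simp only [hfdef, hgdef, hc]; ring
  rw [hfun]
  have hf : Differentiable ℝ f := (Fk_diff κ₀ q s).const_mul c
  have hg : Differentiable ℝ g := Fk_diff κ₁ q s
  have hderf : deriv f = fun z => c * (κ₀ * Fk κ₀ q s z + q * Gk κ₀ q s z) := by
    funext z
    rw [hfdef, deriv_const_mul _ (Fk_diff κ₀ q s z), deriv_Fk]
  have hderg : deriv g = fun z => κ₁ * Fk κ₁ q s z + q * Gk κ₁ q s z := by
    rw [hgdef, deriv_Fk]
  have hf' : Differentiable ℝ (deriv f) := by
    rw [hderf]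
    exact (((Fk_diff κ₀ q s).const_mul κ₀).add ((Gk_diff κ₀ q s).const_mul q)).const_mul c
  have hg' : Differentiable ℝ (deriv g) := by
    rw [hderg]
    exact ((Fk_diff κ₁ q s).const_mul κ₁).add ((Gk_diff κ₁ q s).const_mul q)
  have hderf2 : deriv (deriv f)
      = fun z => c * ((κ₀^2 - q^2) * Fk κ₀ q s z + 2*κ₀*q * Gk κ₀ q s z) := by
    rw [hderf]; funext z
    have h : HasDerivAt (fun w => c * (κ₀ * Fk κ₀ q s w + q * Gk κ₀ q s w))
        (c * (κ₀*(κ₀ * Fk κ₀ q s z + q * Gk κ₀ q s z) + q*(κ₀ * Gk κ₀ q s z - q * Fk κ₀ q s z)))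
        z :=
      (((hasDerivAt_Fk κ₀ q s z).const_mul κ₀).add
        ((hasDerivAt_Gk κ₀ q s z).const_mul q)).const_mul c
    rw [h.deriv]; ring
  have hderg2 : deriv (deriv g)
      = fun z => (κ₁^2 - q^2) * Fk κ₁ q s z + 2*κ₁*q * Gk κ₁ q s z := by
    rw [hderg]; funext z
    have h : HasDerivAt (fun w => κ₁ * Fk κ₁ q s w + q * Gk κ₁ q s w)
        (κ₁*(κ₁ * Fk κ₁ q s z + q * Gk κ₁ q s z) + q*(κ₁ * Gk κ₁ q s z - q * Fk κ₁ q s z)) z :=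
      ((hasDerivAt_Fk κ₁ q s z).const_mul κ₁).add ((hasDerivAt_Gk κ₁ q s z).const_mul q)
    rw [h.deriv]; ring
  rw [lap_prod f g hf hg hf' hg', Fin.sum_univ_two,
    (pd_prod f g hf hg x).1, (pd_prod f g hf hg x).2, hderf2, hderg2, hderf, hderg,
    ha0, ha1]
  simp only [hfdef, hgdef, hc]
  rw [hβ]
  ring

set_option maxHeartbeats 1000000 in
/-- The marine-reserve (Beverton-Holt) model: extinction on a square habitat of
subcritical side length. -/
theorem marine_reserve_extinction
    (d γ μ : ℝ) (hd : 0 < d) (hγ : 0 < γ) (hμ : 0 < μ)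
    (a : EuclideanSpace ℝ (Fin 2))
    (hcond : γ + ‖a‖ ^ 2 / (4 * d) < Real.log (1 + μ))
    (Lstar : ℝ)
    (hLstar : Lstar = Real.pi * Real.sqrt (2 * d) /
      Real.sqrt (Real.log (1 + μ) - γ - ‖a‖ ^ 2 / (4 * d)))
    (L : ℝ) (hL0 : 0 < L) (hLlt : L < Lstar)
    (Ω : Set (EuclideanSpace ℝ (Fin 2)))
    (hΩ : Ω = {x | ∀ i, x i ∈ Set.Ioo 0 L})
    (sol : ImpSol 2 Ω d (fun _ => a) (fun u => -γ * u)
      (fun N => (1 + μ) * N / (1 + μ * N))) :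
    ∀ x ∈ Ω, Tendsto (fun m => sol.N m x) atTop (𝓝 0) := by
  have hμ1 : (0:ℝ) < 1 + μ := by linarith
  set σ := Real.log (1 + μ) - γ - ‖a‖ ^ 2 / (4 * d) with hσdef
  have hσ : 0 < σ := by simp only [hσdef]; linarith
  have hsqσ : 0 < Real.sqrt σ := Real.sqrt_pos.2 hσ
  have hLstar_pos : 0 < Lstar := by
    rw [hLstar]
    exact div_pos (mul_pos Real.pi_pos (Real.sqrt_pos.2 (by linarith))) hsqσ
  set L'' := (L + Lstar)/2 with hL''def
  have hLL'' : L < L'' := by simp only [hL''def]; linarith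
  have hL''lt : L'' < Lstar := by simp only [hL''def]; linarith
  have hL''0 : 0 < L'' := by linarith
  set q := Real.pi / L'' with hqdef
  have hq0 : 0 < q := div_pos Real.pi_pos hL''0
  set s := (L'' - L)/2 with hsdef
  have hs0 : 0 < s := by simp only [hsdef]; linarith
  set κ₀ := a 0 / (2*d) with hκ₀def
  set κ₁ := a 1 / (2*d) with hκ₁def
  have ha0 : a 0 = 2*d*κ₀ := by rw [hκ₀def]; field_simp
  have ha1 : a 1 = 2*d*κ₁ := by rw [hκ₁def]; field_simp
  set β := -γ - d*(κ₀^2 + κ₁^2) - 2*d*q^2 with hβdef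
  set r := (1+μ) * Real.exp β with hrdef
  have hnorm : ‖a‖^2 = (a 0)^2 + (a 1)^2 := by
    rw [EuclideanSpace.norm_eq, Real.sq_sqrt (by positivity)]
    simp [Fin.sum_univ_two, sq_abs]
  have hκsum : d * (κ₀^2 + κ₁^2) = ‖a‖^2/(4*d) := by
    rw [hnorm, hκ₀def, hκ₁def]
    field_simp
    ring
  have hr0 : 0 < r := by rw [hrdef]; positivity
  have hq2 : σ < 2*d*q^2 := by
    have h1 : L'' * Real.sqrt σ < Real.pi * Real.sqrt (2*d) := by
      rw [hLstar] at hL''lt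
      calc L'' * Real.sqrt σ
          < (Real.pi * Real.sqrt (2 * d) / Real.sqrt σ) * Real.sqrt σ :=
            mul_lt_mul_of_pos_right hL''lt hsqσ
        _ = Real.pi * Real.sqrt (2*d) := by field_simp
    have h2 : (L'')^2 * σ < Real.pi^2 * (2*d) := by
      have h1' : 0 ≤ L'' * Real.sqrt σ := by positivity
      have h2' := mul_self_lt_mul_self h1' h1
      have eσ : Real.sqrt σ * Real.sqrt σ = σ := Real.mul_self_sqrt hσ.le
      have ed : Real.sqrt (2*d) * Real.sqrt (2*d) = 2*d := Real.mul_self_sqrt (by linarith)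
      calc (L'')^2 * σ = (L'' * Real.sqrt σ) * (L'' * Real.sqrt σ) := by
            linear_combination (-(L''^2) : ℝ) * eσ
        _ < (Real.pi * Real.sqrt (2*d)) * (Real.pi * Real.sqrt (2*d)) := h2'
        _ = Real.pi^2 * (2*d) := by linear_combination (Real.pi^2 : ℝ) * ed
    have hL2 : (0:ℝ) < L''^2 := by positivity
    rw [hqdef, div_pow]
    rw [show 2*d*(Real.pi^2/L''^2) = (Real.pi^2 * (2*d))/L''^2 by ring]
    rw [lt_div_iff₀ hL2]
    linear_combination h2
  have hlogr : Real.log (1+μ) + β < 0 := by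
    have h1 : Real.log (1+μ) + β = σ - 2*d*q^2 := by
      rw [hβdef, hσdef]
      linarith [hκsum]
    linarith
  have hr1 : r < 1 := by
    rw [hrdef, ← Real.exp_log hμ1, ← Real.exp_add]
    exact Real.exp_lt_one_iff.2 hlogr
  -- geometry of the box
  have hΩopen : IsOpen Ω := by
    rw [hΩ, show {x : EuclideanSpace ℝ (Fin 2) | ∀ i, x i ∈ Set.Ioo 0 L}
        = ⋂ i, (fun x : EuclideanSpace ℝ (Fin 2) => x i) ⁻¹' Set.Ioo 0 L by ext x; simp]
    exact isOpen_iInter_of_finite fun i =>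
      IsOpen.preimage (EuclideanSpace.proj (𝕜 := ℝ) i).continuous isOpen_Ioo
  have hclosub : closure Ω ⊆ {x : EuclideanSpace ℝ (Fin 2) | ∀ i, x i ∈ Set.Icc 0 L} := by
    apply closure_minimal
    · rw [hΩ]; intro x hx i; exact Set.Ioo_subset_Icc_self (hx i)
    · rw [show {x : EuclideanSpace ℝ (Fin 2) | ∀ i, x i ∈ Set.Icc 0 L}
          = ⋂ i, (fun x : EuclideanSpace ℝ (Fin 2) => x i) ⁻¹' Set.Icc 0 L by ext x; simp]
      exact isClosed_iInter fun i =>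
        IsClosed.preimage (EuclideanSpace.proj (𝕜 := ℝ) i).continuous isClosed_Icc
  have hΩbdd : Bornology.IsBounded Ω := by
    rw [isBounded_iff_forall_norm_le]
    refine ⟨Real.sqrt (2 * L^2), fun x hx => ?_⟩
    rw [hΩ] at hx
    rw [EuclideanSpace.norm_eq]
    apply Real.sqrt_le_sqrt
    rw [Fin.sum_univ_two]
    have h0 := hx 0
    have h1 := hx 1
    simp only [Set.mem_Ioo] at h0 h1
    have e0 : ‖x 0‖ ≤ L := by rw [Real.norm_eq_abs]; rw [abs_le]; constructor <;> linarith
    have e1 : ‖x 1‖ ≤ L := by rw [Real.norm_eq_abs]; rw [abs_le]; constructor <;> linarith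
    have p0 : ‖x 0‖^2 ≤ L^2 := pow_le_pow_left₀ (norm_nonneg _) e0 2
    have p1 : ‖x 1‖^2 ≤ L^2 := pow_le_pow_left₀ (norm_nonneg _) e1 2
    linarith
  have hΩc : IsCompact (closure Ω) := hΩbdd.isCompact_closure
  -- the spatial profile
  set φ : EuclideanSpace ℝ (Fin 2) → ℝ := fun x => Fk κ₀ q s (x 0) * Fk κ₁ q s (x 1) with hφdef
  have hsin : ∀ z ∈ Set.Icc (0:ℝ) L, 0 < Real.sin (q*(z+s)) := by
    intro z hz
    apply Real.sin_pos_of_pos_of_lt_pi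
    · exact mul_pos hq0 (by linarith [hz.1, hs0])
    · have hzs : z + s < L'' := by
        have := hz.2
        simp only [hsdef]
        linarith
      calc q * (z+s) < q * L'' := by exact mul_lt_mul_of_pos_left hzs hq0
        _ = Real.pi := by rw [hqdef]; field_simp
  have hFkpos : ∀ κ : ℝ, ∀ z ∈ Set.Icc (0:ℝ) L, 0 < Fk κ q s z := fun κ z hz =>
    mul_pos (Real.exp_pos _) (hsin z hz)
  have hφpos : ∀ x ∈ closure Ω, 0 < φ x := by
    intro x hx
    have h := hclosub hx
    exact mul_pos (hFkpos κ₀ _ (h 0)) (hFkpos κ₁ _ (h 1))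
  have hφcont : ContinuousOn φ (closure Ω) := by
    apply Continuous.continuousOn
    exact ((Fk_diff κ₀ q s).continuous.comp
        (EuclideanSpace.proj (𝕜 := ℝ) (0 : Fin 2)).continuous).mul
      ((Fk_diff κ₁ q s).continuous.comp
        (EuclideanSpace.proj (𝕜 := ℝ) (1 : Fin 2)).continuous)
  have hΩne : Ω.Nonempty := by
    refine ⟨WithLp.toLp 2 (fun _ => L/2 : Fin 2 → ℝ), ?_⟩
    rw [hΩ]
    intro i
    exact ⟨by simp; linarith, by simp; linarith⟩
  have hclone : (closure Ω).Nonempty := hΩne.closure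
  obtain ⟨z₀, hz₀, hz₀min⟩ := hΩc.exists_isMinOn hclone hφcont
  obtain ⟨zM, hzM, hzMmax⟩ := hΩc.exists_isMaxOn hclone (sol.N_cont 0)
  set c₀ := φ z₀ with hc₀def
  have hc₀ : 0 < c₀ := hφpos z₀ hz₀
  set M₀ := sol.N 0 zM with hM₀def
  have hM₀ : 0 ≤ M₀ := sol.N_nonneg 0 zM hzM
  set A₀ := M₀ / c₀ with hA₀def
  have hA₀ : 0 ≤ A₀ := div_nonneg hM₀ hc₀.le
  -- main induction
  have main : ∀ m, ∀ x ∈ closure Ω, sol.N m x ≤ A₀ * r^m * φ x := by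
    intro m
    induction m with
    | zero =>
      intro x hx
      have h1 : sol.N 0 x ≤ M₀ := isMaxOn_iff.mp hzMmax x hx
      have h2 : c₀ ≤ φ x := isMinOn_iff.mp hz₀min x hx
      have h3 : A₀ * c₀ = M₀ := by rw [hA₀def]; field_simp
      calc sol.N 0 x ≤ M₀ := h1
        _ = A₀ * c₀ := h3.symm
        _ ≤ A₀ * φ x := mul_le_mul_of_nonneg_left h2 hA₀
        _ = A₀ * r^0 * φ x := by ring
    | succ m ih =>
      have hArm : 0 ≤ A₀ * r^m := mul_nonneg hA₀ (pow_nonneg hr0.le m)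
      set A := (1+μ) * (A₀ * r^m) with hAdef
      have hAnn : 0 ≤ A := mul_nonneg (by linarith) hArm
      have hMP := max_principle hΩopen hΩc hd hγ a (sol.u m)
        (fun x t => A * Real.exp (β*t) * (Fk κ₀ q s (x 0) * Fk κ₁ q s (x 1)))
        (sol.u_cont m) (sol.u_space_C2 m) (sol.u_time_C1 m) (sol.pde m)
        ?vcont ?vC2 ?vC1 ?vpde ?vinit ?vbdry
      case vcont =>
        exact (continuous_const.mul
            (Real.continuous_exp.comp (continuous_const.mul continuous_snd))).mul
          (((Fk_diff κ₀ q s).continuous.comp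
              ((EuclideanSpace.proj (𝕜 := ℝ) (0 : Fin 2)).continuous.comp continuous_fst)).mul
            ((Fk_diff κ₁ q s).continuous.comp
              ((EuclideanSpace.proj (𝕜 := ℝ) (1 : Fin 2)).continuous.comp continuous_fst)))
      case vC2 =>
        intro t x
        exact (contDiff_const.mul
          (((Fk_contDiff κ₀ q s).comp (EuclideanSpace.proj (𝕜 := ℝ) (0 : Fin 2)).contDiff).mul
            ((Fk_contDiff κ₁ q s).comp
              (EuclideanSpace.proj (𝕜 := ℝ) (1 : Fin 2)).contDiff))).contDiffAt
      case vC1 =>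
        intro x t
        have he : HasDerivAt (fun τ : ℝ => Real.exp (β*τ)) (β * Real.exp (β*t)) t := by
          simpa [mul_comm] using ((hasDerivAt_id t).const_mul β).exp
        exact ((he.const_mul A).mul_const _).differentiableAt
      case vpde =>
        intro x t
        exact vsuper_pde d γ A q s κ₀ κ₁ β a ha0 ha1 hβdef x t
      case vinit =>
        intro x hx
        have hN0 : 0 ≤ sol.N m x := sol.N_nonneg m x (subset_closure hx)
        have hgle : sol.u m x 0 ≤ (1+μ) * sol.N m x := by
          rw [sol.init m x hx]
          exact div_le_self (mul_nonneg (by linarith) hN0)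
            (by have := mul_nonneg hμ.le hN0; linarith)
        have hih := ih x (subset_closure hx)
        calc sol.u m x 0 ≤ (1+μ) * sol.N m x := hgle
          _ ≤ (1+μ) * (A₀ * r^m * φ x) := mul_le_mul_of_nonneg_left hih (by linarith)
          _ = A * Real.exp (β*0) * (Fk κ₀ q s (x 0) * Fk κ₁ q s (x 1)) := by
              simp only [hAdef, hφdef, mul_zero, Real.exp_zero]
              ring
      case vbdry =>
        intro x hx t htIoc
        rw [sol.bdry m x hx t htIoc]
        have hφx : 0 < φ x := hφpos x (frontier_subset_closure hx)
        simp only [hφdef] at hφx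
        positivity
      intro x hx
      have h1 := hMP x hx 1 (by norm_num)
      rw [sol.recur m x hx]
      calc sol.u m x 1 ≤ A * Real.exp (β*1) * (Fk κ₀ q s (x 0) * Fk κ₁ q s (x 1)) := h1
        _ = A₀ * r^(m+1) * φ x := by
            simp only [hAdef, hφdef, hrdef, mul_one]
            ring
  -- conclusion
  intro x hx
  have hxcl : x ∈ closure Ω := subset_closure hx
  have hlim : Tendsto (fun m : ℕ => A₀ * r^m * φ x) atTop (𝓝 0) := by
    have h1 : Tendsto (fun m : ℕ => r^m) atTop (𝓝 0) :=
      tendsto_pow_atTop_nhds_zero_of_lt_one hr0.le hr1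
    have h2 := (h1.const_mul A₀).mul_const (φ x)
    simpa using h2
  exact squeeze_zero (fun m => sol.N_nonneg m x hxcl) (fun m => main m x hxcl) hlim
end
end

section
/- Let d > 0, r > 0, L₁ > 0, L₂ > 0, and s ∈ (0,1) with s > s* := 1 − e^{dπ²·(L₁² + L₂²)/(L₁²·L₂²) − r}. Let Ω = (0,L₁) × (0,L₂) ⊂ ℝ² and take zero drift a = 0. Then every solution of the impulsive reaction–diffusion system on Ω with f(u) = r·(1 − u)·u and g(N) = (1 − s)·N satisfies lim_{m→∞} N_m(x) = 0 for every x ∈ Ω. -/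
open Real Filter MeasureTheory
open scoped Topology ENNReal

noncomputable section

variable {n : ℕ}

lemma derivB {g : ℝ → ℝ} {t₀ : ℝ} (ht : 0 < t₀)
    (hdiff : DifferentiableAt ℝ g t₀) (hmax : ∀ t ∈ Set.Icc (0:ℝ) t₀, g t ≤ g t₀) :
    0 ≤ deriv g t₀ := by
  have h := hasDerivAt_iff_tendsto_slope.1 hdiff.hasDerivAt
  have h' : Tendsto (slope g t₀) (𝓝[<] t₀) (𝓝 (deriv g t₀)) :=
    h.mono_left (nhdsWithin_mono _ (fun x hx => ne_of_lt hx))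
  refine ge_of_tendsto h' ?_
  filter_upwards [Ioo_mem_nhdsLT_of_mem (Set.mem_Ioc.2 ⟨ht, le_refl _⟩)] with x hx
  have h1 : g x - g t₀ ≤ 0 := sub_nonpos.2 (hmax x ⟨hx.1.le, hx.2.le⟩)
  have h2 : x - t₀ < 0 := sub_neg.2 hx.2
  have : slope g t₀ x = (g x - g t₀) / (x - t₀) := by
    rw [slope_def_field]
  rw [this]
  exact div_nonneg_iff.2 (Or.inr ⟨h1, h2.le⟩)

lemma contDiffAt_deriv_of_contDiffAt {g : ℝ → ℝ} {a : ℝ} (hg : ContDiffAt ℝ 2 g a) :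
    ContDiffAt ℝ 1 (deriv g) a := by
  have h1 : ContDiffAt ℝ 1 (fderiv ℝ g) a := hg.fderiv_right (by norm_num)
  have h2 : ContDiffAt ℝ 1 (fun y => fderiv ℝ g y 1) a := by
    exact (ContinuousLinearMap.apply ℝ ℝ (1:ℝ)).contDiff.contDiffAt.comp a h1
  exact h2

lemma derivA {g : ℝ → ℝ} {a : ℝ}
    (hg : ContDiffAt ℝ 2 g a) (hmax : IsLocalMax g a) :
    deriv (deriv g) a ≤ 0 := by
  by_contra hpos
  push_neg at hpos
  have h1 : deriv g a = 0 := hmax.deriv_eq_zero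
  have hg' : ContDiffAt ℝ 1 (deriv g) a := contDiffAt_deriv_of_contDiffAt hg
  have hd : HasDerivAt (deriv g) (deriv (deriv g) a) a :=
    (hg'.differentiableAt one_ne_zero).hasDerivAt
  have hslope := hasDerivAt_iff_tendsto_slope.1 hd
  have hsl : ∀ᶠ x in 𝓝[≠] a, 0 < slope (deriv g) a x :=
    hslope.eventually (eventually_gt_nhds hpos)
  have hsl' : ∀ᶠ x in 𝓝[>] a, 0 < deriv g x := by
    have := hsl.filter_mono (nhdsWithin_mono _ (fun x hx => ne_of_gt hx))
    filter_upwards [this, self_mem_nhdsWithin] with x hx hx'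
    have hxa : (0:ℝ) < x - a := sub_pos.2 hx'
    have : slope (deriv g) a x = deriv g x / (x - a) := by
      rw [slope_def_field, h1]; ring
    rw [this] at hx
    have := mul_pos hx hxa
    rwa [div_mul_cancel₀] at this
    exact hxa.ne'
  -- get radii
  obtain ⟨δ₁, hδ₁, hE1⟩ := Metric.eventually_nhds_iff.1 hmax
  have hEdiff : ∀ᶠ x in 𝓝 a, DifferentiableAt ℝ g x := by
    filter_upwards [hg.eventually (by norm_num)] with y hy
    exact hy.differentiableAt two_ne_zero
  obtain ⟨δ₂, hδ₂, hE2⟩ := Metric.eventually_nhds_iff.1 hEdiff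
  obtain ⟨u, hu, hE3⟩ := (mem_nhdsGT_iff_exists_Ioo_subset).1 hsl'
  obtain ⟨ε, hεpos, hεδ₁, hεδ₂, hεu⟩ : ∃ ε : ℝ, 0 < ε ∧ ε ≤ δ₁ ∧ ε ≤ δ₂ ∧ ε ≤ u - a :=
    ⟨min (min δ₁ δ₂) (u - a), lt_min (lt_min hδ₁ hδ₂) (sub_pos.2 hu),
      le_trans (min_le_left _ _) (min_le_left _ _),
      le_trans (min_le_left _ _) (min_le_right _ _), min_le_right _ _⟩
  obtain ⟨b, hb⟩ : ∃ b : ℝ, b = a + ε / 2 := ⟨_, rfl⟩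
  have hab : a < b := by rw [hb]; linarith
  have hmono : StrictMonoOn g (Set.Icc a b) := by
    apply strictMonoOn_of_deriv_pos (convex_Icc a b)
    · intro y hy
      have hy2 : y ≤ a + ε / 2 := hb ▸ hy.2
      have : dist y a < δ₂ := by
        rw [Real.dist_eq, abs_sub_lt_iff]
        refine ⟨by linarith [hy.1, hεδ₂], by linarith [hy.1, hεδ₂]⟩
      exact ((hE2 this).continuousAt).continuousWithinAt
    · intro y hy
      rw [interior_Icc] at hy
      apply hE3
      constructor
      · exact hy.1
      · have := hy.2
        rw [hb] at this
        linarith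
  have : g a < g b := hmono (Set.left_mem_Icc.2 hab.le) (Set.right_mem_Icc.2 hab.le) hab
  have hba : g b ≤ g a := by
    apply hE1
    rw [Real.dist_eq, hb, abs_sub_lt_iff]
    refine ⟨by linarith, by linarith⟩
  linarith


lemma line_deriv2 (F : EuclideanSpace ℝ (Fin n) → ℝ) (x e : EuclideanSpace ℝ (Fin n))
    (hF : ContDiffAt ℝ 2 F x) :
    deriv (deriv (fun s : ℝ => F (x + s • e))) 0 = fderiv ℝ (fun y => fderiv ℝ F y e) x e := by
  obtain ⟨U, hU, hFU⟩ := hF.contDiffOn le_rfl (by norm_num)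
  obtain ⟨V, hVU, hV, hxV⟩ := mem_nhds_iff.1 hU
  have hFV : ContDiffOn ℝ 2 F V := hFU.mono hVU
  have hFdiff : ∀ y ∈ V, DifferentiableAt ℝ F y := fun y hy =>
    ((hFV y hy).contDiffAt (hV.mem_nhds hy)).differentiableAt two_ne_zero
  have hL : ∀ s : ℝ, HasDerivAt (fun s : ℝ => x + s • e) e s := by
    intro s
    simpa using ((hasDerivAt_id s).smul_const e).const_add x
  have hL0 : (fun s : ℝ => x + s • e) 0 = x := by simp
  have hVopen : IsOpen ((fun s : ℝ => x + s • e) ⁻¹' V) :=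
    hV.preimage (by continuity)
  have h0mem : (0:ℝ) ∈ (fun s : ℝ => x + s • e) ⁻¹' V := by simp [hxV]
  -- first derivative eventually
  have hev : (deriv (fun s : ℝ => F (x + s • e))) =ᶠ[𝓝 (0:ℝ)]
      (fun s => fderiv ℝ F (x + s • e) e) := by
    filter_upwards [hVopen.mem_nhds h0mem] with s hs
    have : HasDerivAt (fun s : ℝ => F (x + s • e)) (fderiv ℝ F (x + s • e) e) s := by
      have hdF := (hFdiff _ hs).hasFDerivAt
      exact hdF.comp_hasDerivAt s (hL s)
    exact this.deriv
  rw [hev.deriv_eq]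
  -- second derivative
  have hA : ContDiffAt ℝ 1 (fderiv ℝ F) x := hF.fderiv_right (by norm_num)
  have hA' : DifferentiableAt ℝ (fderiv ℝ F) x := hA.differentiableAt one_ne_zero
  have hcomp : HasDerivAt (fun s : ℝ => fderiv ℝ F (x + s • e))
      ((fderiv ℝ (fderiv ℝ F) x) e) 0 := by
    have hA'' : HasFDerivAt (fderiv ℝ F) (fderiv ℝ (fderiv ℝ F) x) (x + (0:ℝ) • e) := by
      simpa using hA'.hasFDerivAt
    exact hA''.comp_hasDerivAt 0 (hL 0)
  have happ : HasDerivAt (fun s : ℝ => fderiv ℝ F (x + s • e) e)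
      (((fderiv ℝ (fderiv ℝ F) x) e) e) 0 :=
    (ContinuousLinearMap.apply ℝ ℝ e).hasFDerivAt.comp_hasDerivAt 0 hcomp
  rw [happ.deriv]
  -- RHS
  have hrhs : fderiv ℝ (fun y => fderiv ℝ F y e) x =
      (ContinuousLinearMap.apply ℝ ℝ e).comp (fderiv ℝ (fderiv ℝ F) x) := by
    exact ((ContinuousLinearMap.apply ℝ ℝ e).hasFDerivAt.comp x hA'.hasFDerivAt).fderiv
  rw [hrhs]
  rfl

lemma pd2_nonpos_of_isLocalMax (F : EuclideanSpace ℝ (Fin n) → ℝ)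
    (x : EuclideanSpace ℝ (Fin n)) (hF : ContDiffAt ℝ 2 F x)
    (hmax : IsLocalMax F x) (i : Fin n) : pd2 F i i x ≤ 0 := by
  set e := EuclideanSpace.single i (1:ℝ) with he
  have hL0 : x + (0:ℝ) • e = x := by simp
  have hG : ContDiffAt ℝ 2 (fun s : ℝ => F (x + s • e)) 0 := by
    have hline : ContDiffAt ℝ 2 (fun s : ℝ => x + s • e) (0:ℝ) :=
      (contDiff_const.add (contDiff_id.smul contDiff_const)).contDiffAt
    exact ContDiffAt.comp 0 (show ContDiffAt ℝ 2 F (x + (0:ℝ) • e) by rwa [hL0]) hline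
  have hGmax : IsLocalMax (fun s : ℝ => F (x + s • e)) 0 := by
    have hcont : ContinuousAt (fun s : ℝ => x + s • e) 0 :=
      (continuous_const.add (continuous_id.smul continuous_const)).continuousAt
    have ht := hcont.tendsto
    rw [hL0] at ht
    have h2 : ∀ᶠ s in 𝓝 (0:ℝ), F (x + s • e) ≤ F x := ht.eventually hmax
    show ∀ᶠ s in 𝓝 (0:ℝ), F (x + s • e) ≤ F (x + (0:ℝ) • e)
    rw [hL0]
    exact h2
  have h := derivA hG hGmax
  have heq := line_deriv2 F x e hF
  rw [heq] at h
  simpa [pd2, pd, he] using h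

lemma pd2_linear {F G : EuclideanSpace ℝ (Fin n) → ℝ} {x : EuclideanSpace ℝ (Fin n)}
    (hF : ContDiffAt ℝ 2 F x) (hG : ContDiffAt ℝ 2 G x) (a b : ℝ) (i j : Fin n) :
    pd2 (fun y => a * F y + b * G y) i j x = a * pd2 F i j x + b * pd2 G i j x := by
  have hFd : ∀ᶠ y in 𝓝 x, DifferentiableAt ℝ F y := by
    filter_upwards [hF.eventually (by norm_num)] with y hy
    exact hy.differentiableAt two_ne_zero
  have hGd : ∀ᶠ y in 𝓝 x, DifferentiableAt ℝ G y := by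
    filter_upwards [hG.eventually (by norm_num)] with y hy
    exact hy.differentiableAt two_ne_zero
  have hev : (fun y => pd (fun z => a * F z + b * G z) j y) =ᶠ[𝓝 x]
      (fun y => a * pd F j y + b * pd G j y) := by
    filter_upwards [hFd, hGd] with y hFy hGy
    simp only [pd]
    rw [fderiv_fun_add ((hFy.const_mul a)) ((hGy.const_mul b)),
      fderiv_const_mul hFy, fderiv_const_mul hGy]
    simp
  have hpdF : DifferentiableAt ℝ (fun y => pd F j y) x := by
    have h1 : ContDiffAt ℝ 1 (fderiv ℝ F) x := hF.fderiv_right (by norm_num)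
    exact ((ContinuousLinearMap.apply ℝ ℝ (EuclideanSpace.single j (1:ℝ))).contDiff.contDiffAt.comp
      x h1).differentiableAt one_ne_zero
  have hpdG : DifferentiableAt ℝ (fun y => pd G j y) x := by
    have h1 : ContDiffAt ℝ 1 (fderiv ℝ G) x := hG.fderiv_right (by norm_num)
    exact ((ContinuousLinearMap.apply ℝ ℝ (EuclideanSpace.single j (1:ℝ))).contDiff.contDiffAt.comp
      x h1).differentiableAt one_ne_zero
  show pd (fun y => pd (fun z => a * F z + b * G z) j y) i x = _
  simp only [pd] at *
  rw [hev.fderiv_eq]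
  rw [fderiv_fun_add (hpdF.const_mul a) (hpdG.const_mul b),
    fderiv_const_mul hpdF, fderiv_const_mul hpdG]
  simp [pd2, pd]

abbrev E2 := EuclideanSpace ℝ (Fin 2)

lemma hasDerivAt_cos_affine (α c v : ℝ) :
    HasDerivAt (fun w => Real.cos (α * w + c)) (-(α * Real.sin (α * v + c))) v := by
  have h := (Real.hasDerivAt_cos (α * v + c)).comp v
    (((hasDerivAt_id v).const_mul α).add_const c)
  refine h.congr_deriv ?_
  ring

lemma hasDerivAt_sin_affine (α c v : ℝ) :
    HasDerivAt (fun w => Real.sin (α * w + c)) (α * Real.cos (α * v + c)) v := by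
  have h := (Real.hasDerivAt_sin (α * v + c)).comp v
    (((hasDerivAt_id v).const_mul α).add_const c)
  refine h.congr_deriv ?_
  ring

lemma hasFDerivAt_sep (f g : ℝ → ℝ) (f' g' : ℝ) (y : E2)
    (hf : HasDerivAt f f' (y 0)) (hg : HasDerivAt g g' (y 1)) :
    HasFDerivAt (fun z : E2 => f (z 0) * g (z 1))
      ((g (y 1) * f') • (EuclideanSpace.proj (0 : Fin 2) : E2 →L[ℝ] ℝ) +
       (f (y 0) * g') • (EuclideanSpace.proj (1 : Fin 2) : E2 →L[ℝ] ℝ)) y := by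
  have h0 : HasFDerivAt (fun z : E2 => z 0)
      ((EuclideanSpace.proj (0 : Fin 2)) : E2 →L[ℝ] ℝ) y :=
    by simpa using ((EuclideanSpace.proj (0 : Fin 2) : E2 →L[ℝ] ℝ)).hasFDerivAt (x := y)
  have h1 : HasFDerivAt (fun z : E2 => z 1)
      ((EuclideanSpace.proj (1 : Fin 2)) : E2 →L[ℝ] ℝ) y :=
    by simpa using ((EuclideanSpace.proj (1 : Fin 2) : E2 →L[ℝ] ℝ)).hasFDerivAt (x := y)
  have hf1 : HasFDerivAt (fun z : E2 => f (z 0))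
      (f' • (EuclideanSpace.proj (0 : Fin 2) : E2 →L[ℝ] ℝ)) y := hf.comp_hasFDerivAt y h0
  have hg1 : HasFDerivAt (fun z : E2 => g (z 1))
      (g' • (EuclideanSpace.proj (1 : Fin 2) : E2 →L[ℝ] ℝ)) y := hg.comp_hasFDerivAt y h1
  have h := hf1.mul hg1
  refine h.congr_fderiv ?_
  ext z
  simp [smul_smul]
  ring

lemma pd_sep0 (f g : ℝ → ℝ) (f' g' : ℝ) (y : E2)
    (hf : HasDerivAt f f' (y 0)) (hg : HasDerivAt g g' (y 1)) :
    pd (fun z : E2 => f (z 0) * g (z 1)) 0 y = f' * g (y 1) := by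
  rw [pd, (hasFDerivAt_sep f g f' g' y hf hg).fderiv]
  simp [EuclideanSpace.single_apply]
  ring

lemma pd_sep1 (f g : ℝ → ℝ) (f' g' : ℝ) (y : E2)
    (hf : HasDerivAt f f' (y 0)) (hg : HasDerivAt g g' (y 1)) :
    pd (fun z : E2 => f (z 0) * g (z 1)) 1 y = f (y 0) * g' := by
  rw [pd, (hasFDerivAt_sep f g f' g' y hf hg).fderiv]
  simp [EuclideanSpace.single_apply]

lemma lap_cosprod (α β c₁ c₂ : ℝ) (y : E2) :
    lap (fun z : E2 => Real.cos (α * z 0 + c₁) * Real.cos (β * z 1 + c₂)) y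
      = -(α ^ 2 + β ^ 2) * (Real.cos (α * y 0 + c₁) * Real.cos (β * y 1 + c₂)) := by
  have hpd0 : (fun y : E2 => pd (fun z : E2 => Real.cos (α * z 0 + c₁) * Real.cos (β * z 1 + c₂)) 0 y)
      = fun z : E2 => (-(α * Real.sin (α * z 0 + c₁))) * Real.cos (β * z 1 + c₂) := by
    funext z
    exact pd_sep0 _ _ _ _ z (hasDerivAt_cos_affine α c₁ (z 0)) (hasDerivAt_cos_affine β c₂ (z 1))
  have hpd1 : (fun y : E2 => pd (fun z : E2 => Real.cos (α * z 0 + c₁) * Real.cos (β * z 1 + c₂)) 1 y)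
      = fun z : E2 => Real.cos (α * z 0 + c₁) * (-(β * Real.sin (β * z 1 + c₂))) := by
    funext z
    exact pd_sep1 _ _ _ _ z (hasDerivAt_cos_affine α c₁ (z 0)) (hasDerivAt_cos_affine β c₂ (z 1))
  have h00 : pd2 (fun z : E2 => Real.cos (α * z 0 + c₁) * Real.cos (β * z 1 + c₂)) 0 0 y
      = -(α ^ 2) * (Real.cos (α * y 0 + c₁) * Real.cos (β * y 1 + c₂)) := by
    rw [pd2, hpd0]
    have h := pd_sep0 (fun w => -(α * Real.sin (α * w + c₁))) (fun w => Real.cos (β * w + c₂))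
      (-(α * (α * Real.cos (α * y 0 + c₁)))) (-(β * Real.sin (β * y 1 + c₂))) y
      (((hasDerivAt_sin_affine α c₁ (y 0)).const_mul α).neg)
      (hasDerivAt_cos_affine β c₂ (y 1))
    rw [h]
    ring
  have h11 : pd2 (fun z : E2 => Real.cos (α * z 0 + c₁) * Real.cos (β * z 1 + c₂)) 1 1 y
      = -(β ^ 2) * (Real.cos (α * y 0 + c₁) * Real.cos (β * y 1 + c₂)) := by
    rw [pd2, hpd1]
    have h := pd_sep1 (fun w => Real.cos (α * w + c₁)) (fun w => -(β * Real.sin (β * w + c₂)))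
      (-(α * Real.sin (α * y 0 + c₁))) (-(β * (β * Real.cos (β * y 1 + c₂)))) y
      (hasDerivAt_cos_affine α c₁ (y 0))
      (((hasDerivAt_sin_affine β c₂ (y 1)).const_mul β).neg)
    rw [h]
    ring
  rw [lap, Fin.sum_univ_two, h00, h11]
  ring

lemma season_bound
    (d r s : ℝ) (hd : 0 < d) (hr : 0 < r) (Ω : Set E2)
    (hΩopen : IsOpen Ω) (hcomp : IsCompact (closure Ω))
    (sol : ImpSol 2 Ω d (fun _ => 0) (fun u => r * (1 - u) * u) (fun N => (1 - s) * N))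
    (α β c₁ c₂ : ℝ) (P : E2 → ℝ)
    (hP : P = fun z : E2 => Real.cos (α * z 0 + c₁) * Real.cos (β * z 1 + c₂))
    (hPpos : ∀ x ∈ closure Ω, 0 ≤ P x)
    (μ : ℝ) (hμ : μ = r - d * (α ^ 2 + β ^ 2))
    (C : ℝ) (hC : 0 ≤ C) (m : ℕ)
    (hinit : ∀ x ∈ Ω, sol.u m x 0 ≤ C * P x) :
    ∀ x ∈ closure Ω, ∀ t ∈ Set.Icc (0:ℝ) 1, sol.u m x t ≤ C * Real.exp (μ * t) * P x := by
  intro x hx t ht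
  have hPcont : Continuous P := by
    rw [hP]
    fun_prop
  have hPC2 : ∀ y : E2, ContDiffAt ℝ 2 P y := by
    intro y
    rw [hP]
    have hproj0 : (fun z : E2 => z 0) = ⇑(EuclideanSpace.proj (0 : Fin 2) : E2 →L[ℝ] ℝ) := rfl
    have hproj1 : (fun z : E2 => z 1) = ⇑(EuclideanSpace.proj (1 : Fin 2) : E2 →L[ℝ] ℝ) := rfl
    have h0 : ContDiff ℝ 2 (fun z : E2 => z 0) := by
      rw [hproj0]; exact (EuclideanSpace.proj (0 : Fin 2) : E2 →L[ℝ] ℝ).contDiff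
    have h1 : ContDiff ℝ 2 (fun z : E2 => z 1) := by
      rw [hproj1]; exact (EuclideanSpace.proj (1 : Fin 2) : E2 →L[ℝ] ℝ).contDiff
    exact (((Real.contDiff_cos.comp ((contDiff_const.mul h0).add contDiff_const)).mul
      (Real.contDiff_cos.comp ((contDiff_const.mul h1).add contDiff_const))).contDiffAt)
  set k : ℝ := r + 1 with hk
  set K : Set (E2 × ℝ) := closure Ω ×ˢ Set.Icc (0:ℝ) 1 with hK
  set V : E2 × ℝ → ℝ := fun p =>
    Real.exp (-(k * p.2)) * (sol.u m p.1 p.2 - C * Real.exp (μ * p.2) * P p.1) with hV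
  have hKcomp : IsCompact K := hcomp.prod isCompact_Icc
  have hVcont : ContinuousOn V K := by
    apply ContinuousOn.mul
    · exact (Real.continuous_exp.comp (continuous_const.mul continuous_snd).neg).continuousOn
    · exact (sol.u_cont m).sub
        ((continuous_const.mul (Real.continuous_exp.comp (continuous_const.mul continuous_snd))).mul
          (hPcont.comp continuous_fst)).continuousOn
  have hxt : (x, t) ∈ K := Set.mk_mem_prod hx ht
  obtain ⟨p₀, hp₀K, hp₀max⟩ := hKcomp.exists_isMaxOn ⟨(x, t), hxt⟩ hVcont
  -- claim V p₀ ≤ 0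
  have hmain : V p₀ ≤ 0 := by
    by_contra hM
    push_neg at hM
    obtain ⟨hx₀cl, ht₀mem⟩ := hp₀K
    set x₀ := p₀.1 with hx₀
    set t₀ := p₀.2 with ht₀
    -- initial data bound on closure
    have hinit' : ∀ y ∈ closure Ω, sol.u m y 0 ≤ C * P y := by
      have hclosed : IsClosed (closure Ω ∩ (fun y => sol.u m y 0 - C * P y) ⁻¹' Set.Iic 0) := by
        apply ContinuousOn.preimage_isClosed_of_isClosed _ isClosed_closure isClosed_Iic
        apply ContinuousOn.sub
        · have hmap : Set.MapsTo (fun y : E2 => (y, (0:ℝ))) (closure Ω) K := by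
            intro y hy
            exact Set.mk_mem_prod hy (Set.left_mem_Icc.2 zero_le_one)
          exact (sol.u_cont m).comp
            ((continuous_id.prodMk continuous_const).continuousOn) hmap
        · exact (continuous_const.mul hPcont).continuousOn
      have hsub : Ω ⊆ closure Ω ∩ (fun y => sol.u m y 0 - C * P y) ⁻¹' Set.Iic 0 := by
        intro y hy
        exact ⟨subset_closure hy, by simpa using sub_nonpos.2 (hinit y hy)⟩
      intro y hy
      have := (closure_minimal hsub hclosed) hy
      simpa using sub_nonpos.1 this.2
    -- t₀ ≠ 0
    have ht₀pos : 0 < t₀ := by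
      rcases eq_or_lt_of_le ht₀mem.1 with h | h
      · exfalso
        have : V p₀ ≤ 0 := by
          have h0 : V p₀ = sol.u m x₀ 0 - C * P x₀ := by
            simp only [hV, ← hx₀, ← ht₀, ← h]
            simp
          rw [h0]
          exact sub_nonpos.2 (hinit' x₀ hx₀cl)
        linarith
      · exact h
    have ht₀Ioc : t₀ ∈ Set.Ioc (0:ℝ) 1 := ⟨ht₀pos, ht₀mem.2⟩
    -- x₀ ∈ Ω
    have hx₀Ω : x₀ ∈ Ω := by
      by_contra hxo
      have hfr : x₀ ∈ frontier Ω := by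
        rw [frontier, hΩopen.interior_eq]
        exact ⟨hx₀cl, hxo⟩
      have hub : sol.u m x₀ t₀ = 0 := sol.bdry m x₀ hfr t₀ ht₀Ioc
      have : V p₀ ≤ 0 := by
        have h0 : V p₀ = Real.exp (-(k * t₀)) * (0 - C * Real.exp (μ * t₀) * P x₀) := by
          simp only [hV, ← hx₀, ← ht₀, hub]
        rw [h0]
        apply mul_nonpos_of_nonneg_of_nonpos (Real.exp_pos _).le
        have : 0 ≤ C * Real.exp (μ * t₀) * P x₀ :=
          mul_nonneg (mul_nonneg hC (Real.exp_pos _).le) (hPpos x₀ hx₀cl)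
        linarith
      linarith
    -- abbreviations
    set U : ℝ := sol.u m x₀ t₀ with hU
    set a : ℝ := Real.exp (-(k * t₀)) with ha
    set W : ℝ := C * Real.exp (μ * t₀) * P x₀ with hW
    have hapos : 0 < a := Real.exp_pos _
    have hM' : 0 < a * (U - W) := by
      have : V p₀ = a * (U - W) := by simp only [hV, ← hx₀, ← ht₀, ha, hU, hW]
      linarith [hM, this.symm.le, this.le]
    have hW0 : 0 ≤ W :=
      mul_nonneg (mul_nonneg hC (Real.exp_pos _).le) (hPpos x₀ hx₀cl)
    have hU0 : 0 ≤ U := sol.u_nonneg m x₀ hx₀cl t₀ ⟨ht₀pos.le, ht₀mem.2⟩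
    -- time derivative
    have hdu : HasDerivAt (fun τ => sol.u m x₀ τ) (deriv (fun τ => sol.u m x₀ τ) t₀) t₀ :=
      ((sol.u_time_C1 m x₀ hx₀Ω t₀ ht₀Ioc).differentiableAt one_ne_zero).hasDerivAt
    set du : ℝ := deriv (fun τ => sol.u m x₀ τ) t₀ with hdu'
    have he1 : HasDerivAt (fun τ : ℝ => Real.exp (-(k * τ))) (-k * Real.exp (-(k * t₀))) t₀ := by
      have h := (Real.hasDerivAt_exp (-(k * t₀))).comp t₀
        (((hasDerivAt_id t₀).const_mul k).neg)
      refine h.congr_deriv ?_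
      ring
    have he2 : HasDerivAt (fun τ : ℝ => C * Real.exp (μ * τ) * P x₀)
        (C * (μ * Real.exp (μ * t₀)) * P x₀) t₀ := by
      have h := (((Real.hasDerivAt_exp (μ * t₀)).comp t₀
        ((hasDerivAt_id t₀).const_mul μ)).const_mul C).mul_const (P x₀)
      refine h.congr_deriv ?_
      ring
    have hgd : HasDerivAt (fun τ => V (x₀, τ))
        (-k * Real.exp (-(k * t₀)) * (sol.u m x₀ t₀ - C * Real.exp (μ * t₀) * P x₀)
          + Real.exp (-(k * t₀)) * (du - C * (μ * Real.exp (μ * t₀)) * P x₀)) t₀ := by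
      have h := he1.mul (hdu.sub he2)
      exact h
    have hmaxIcc : ∀ τ ∈ Set.Icc (0:ℝ) t₀, V (x₀, τ) ≤ V (x₀, t₀) := by
      intro τ hτ
      have hmem : (x₀, τ) ∈ K := Set.mk_mem_prod hx₀cl ⟨hτ.1, le_trans hτ.2 ht₀mem.2⟩
      have h1 := hp₀max hmem
      have h2 : V (x₀, t₀) = V p₀ := by rw [hx₀, ht₀]
      rw [h2]
      exact h1
    have htime : 0 ≤ -k * a * (U - W) + a * (du - C * (μ * Real.exp (μ * t₀)) * P x₀) := by
      have h0 := derivB ht₀pos hgd.differentiableAt hmaxIcc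
      rw [hgd.deriv] at h0
      exact h0
    -- space part
    set F : E2 → ℝ := fun y => a * sol.u m y t₀ + (-(a * C * Real.exp (μ * t₀))) * P y with hF
    have hFC2 : ContDiffAt ℝ 2 F x₀ :=
      (contDiffAt_const.mul (sol.u_space_C2 m t₀ ht₀Ioc x₀ hx₀Ω)).add
        (contDiffAt_const.mul (hPC2 x₀))
    have hFmax : IsLocalMax F x₀ := by
      have hFV : ∀ y, F y = V (y, t₀) := by
        intro y
        simp only [hF, hV, ha]
        ring
      filter_upwards [hΩopen.mem_nhds hx₀Ω] with y hy
      rw [hFV, hFV]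
      have hmem : (y, t₀) ∈ K := Set.mk_mem_prod (subset_closure hy) ⟨ht₀pos.le, ht₀mem.2⟩
      have h1 := hp₀max hmem
      have h2 : V (x₀, t₀) = V p₀ := by rw [hx₀, ht₀]
      rw [h2]
      exact h1
    have hlapF : lap F x₀ ≤ 0 := by
      rw [lap, Fin.sum_univ_two]
      have h0 := pd2_nonpos_of_isLocalMax F x₀ hFC2 hFmax 0
      have h1 := pd2_nonpos_of_isLocalMax F x₀ hFC2 hFmax 1
      linarith
    have hlapsplit : ∀ i : Fin 2, pd2 F i i x₀ =
        a * pd2 (fun y => sol.u m y t₀) i i x₀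
          + (-(a * C * Real.exp (μ * t₀))) * pd2 P i i x₀ := fun i =>
      pd2_linear (sol.u_space_C2 m t₀ ht₀Ioc x₀ hx₀Ω) (hPC2 x₀) a _ i i
    have hlapP : lap P x₀ = -(α ^ 2 + β ^ 2) * P x₀ := by
      rw [hP]
      exact lap_cosprod α β c₁ c₂ x₀
    set Lu : ℝ := lap (fun y => sol.u m y t₀) x₀ with hLu
    have hP2 : pd2 P 0 0 x₀ + pd2 P 1 1 x₀ = -(α ^ 2 + β ^ 2) * P x₀ := by
      have h := hlapP
      rw [lap, Fin.sum_univ_two] at h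
      linarith
    have hLu2 : Lu = pd2 (fun y => sol.u m y t₀) 0 0 x₀
        + pd2 (fun y => sol.u m y t₀) 1 1 x₀ := by
      rw [hLu, lap, Fin.sum_univ_two]
    have hlapF' : lap F x₀ = a * Lu
        + (-(a * C * Real.exp (μ * t₀))) * (-(α ^ 2 + β ^ 2) * P x₀) := by
      rw [lap, Fin.sum_univ_two, hlapsplit 0, hlapsplit 1, hLu2]
      linear_combination (-(a * C * Real.exp (μ * t₀))) * hP2
    rw [hlapF'] at hlapF
    -- the PDE
    have hpde := sol.pde m x₀ hx₀Ω t₀ ht₀Ioc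
    have hsum0 : (∑ i : Fin 2, (fun _ : E2 => (0:E2)) x₀ i *
        pd (fun y => sol.u m y t₀) i x₀) = 0 := by
      simp
    rw [hsum0] at hpde
    have hdueq : du = d * Lu + r * (1 - U) * U := by
      rw [hdu', hpde]
      simp only [hLu, hU]
      ring
    -- contradiction by linear arithmetic in monomials
    have hs2 : a * Lu ≤ -((α ^ 2 + β ^ 2) * (a * W)) := by
      have hmono : (-(a * C * Real.exp (μ * t₀))) * (-(α ^ 2 + β ^ 2) * P x₀)
          = (α ^ 2 + β ^ 2) * (a * W) := by
        rw [hW]; ring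
      linarith [hlapF, hmono]
    have hs3 : d * (a * Lu) ≤ d * (-((α ^ 2 + β ^ 2) * (a * W))) :=
      mul_le_mul_of_nonneg_left hs2 hd.le
    have hdua : a * du = d * (a * Lu) + r * (a * U) - r * (a * (U * U)) := by
      rw [hdueq]; ring
    have hmono2 : a * (C * (μ * Real.exp (μ * t₀)) * P x₀) = μ * (a * W) := by
      rw [hW]; ring
    have htime2 : 0 ≤ -(k * (a * U)) + k * (a * W) + a * du - μ * (a * W) := by
      nlinarith [htime, hmono2]
    have hμs : μ * (a * W) = r * (a * W) - d * ((α ^ 2 + β ^ 2) * (a * W)) := by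
      rw [hμ]; ring
    have hkU : k * (a * U) = r * (a * U) + a * U := by rw [hk]; ring
    have hkW : k * (a * W) = r * (a * W) + a * W := by rw [hk]; ring
    have hrU2 : 0 ≤ r * (a * (U * U)) :=
      mul_nonneg hr.le (mul_nonneg hapos.le (mul_self_nonneg U))
    linarith [htime2, hdua, hs3, hμs, hkU, hkW, hM', hrU2]
  -- conclude
  have hVxt := hp₀max hxt
  have h3 : Real.exp (-(k * t)) * (sol.u m x t - C * Real.exp (μ * t) * P x) ≤ 0 :=
    le_trans hVxt hmain
  have h4 : sol.u m x t - C * Real.exp (μ * t) * P x ≤ 0 := by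
    by_contra h5
    push_neg at h5
    nlinarith [mul_pos (Real.exp_pos (-(k * t))) h5]
  linarith

set_option maxHeartbeats 1600000 in
/-- The insect-pest model: extirpation on a rectangular habitat when the removal
fraction `s` exceeds the critical value `s*`. -/
theorem insect_pest_extirpation
    (d r L₁ L₂ s : ℝ) (hd : 0 < d) (hr : 0 < r)
    (hL₁ : 0 < L₁) (hL₂ : 0 < L₂) (hs0 : 0 < s) (hs1 : s < 1)
    (hss : 1 - Real.exp (d * Real.pi ^ 2 * (L₁ ^ 2 + L₂ ^ 2) / (L₁ ^ 2 * L₂ ^ 2) - r) < s)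
    (Ω : Set (EuclideanSpace ℝ (Fin 2)))
    (hΩ : Ω = {x | x 0 ∈ Set.Ioo 0 L₁ ∧ x 1 ∈ Set.Ioo 0 L₂})
    (sol : ImpSol 2 Ω d (fun _ => 0) (fun u => r * (1 - u) * u)
      (fun N => (1 - s) * N)) :
    ∀ x ∈ Ω, Tendsto (fun m => sol.N m x) atTop (𝓝 0) := by
  intro x hxΩ
  have hs' : (0:ℝ) < 1 - s := by linarith
  have hπ := Real.pi_pos
  -- openness
  have hΩopen : IsOpen Ω := by
    rw [hΩ]
    have h0 : IsOpen {z : E2 | z 0 ∈ Set.Ioo (0:ℝ) L₁} :=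
      isOpen_Ioo.preimage (EuclideanSpace.proj (0:Fin 2) : E2 →L[ℝ] ℝ).continuous
    have h1 : IsOpen {z : E2 | z 1 ∈ Set.Ioo (0:ℝ) L₂} :=
      isOpen_Ioo.preimage (EuclideanSpace.proj (1:Fin 2) : E2 →L[ℝ] ℝ).continuous
    exact h0.inter h1
  -- the closed box
  set Box : Set E2 := {z | z 0 ∈ Set.Icc 0 L₁ ∧ z 1 ∈ Set.Icc 0 L₂} with hBox
  have hboxclosed : IsClosed Box := by
    rw [hBox]
    have h0 : IsClosed {z : E2 | z 0 ∈ Set.Icc (0:ℝ) L₁} :=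
      isClosed_Icc.preimage (EuclideanSpace.proj (0:Fin 2) : E2 →L[ℝ] ℝ).continuous
    have h1 : IsClosed {z : E2 | z 1 ∈ Set.Icc (0:ℝ) L₂} :=
      isClosed_Icc.preimage (EuclideanSpace.proj (1:Fin 2) : E2 →L[ℝ] ℝ).continuous
    exact h0.inter h1
  have hΩbox : Ω ⊆ Box := by
    rw [hΩ]
    rintro z ⟨h0, h1⟩
    exact ⟨⟨h0.1.le, h0.2.le⟩, ⟨h1.1.le, h1.2.le⟩⟩
  have hclbox : closure Ω ⊆ Box := closure_minimal hΩbox hboxclosed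
  -- compactness
  have hcompact : IsCompact (closure Ω) := by
    apply IsCompact.of_isClosed_subset (isCompact_closedBall (0:E2) (L₁ + L₂)) isClosed_closure
    intro z hz
    have hzb := hclbox hz
    rw [Metric.mem_closedBall, dist_zero_right]
    rw [EuclideanSpace.norm_eq]
    have hsum : (∑ i, ‖z i‖ ^ 2) = ‖z 0‖ ^ 2 + ‖z 1‖ ^ 2 := Fin.sum_univ_two _
    rw [hsum]
    have h0 : ‖z 0‖ ≤ L₁ := by
      rw [Real.norm_eq_abs, abs_le]
      exact ⟨by linarith [hzb.1.1], hzb.1.2⟩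
    have h1 : ‖z 1‖ ≤ L₂ := by
      rw [Real.norm_eq_abs, abs_le]
      exact ⟨by linarith [hzb.2.1], hzb.2.2⟩
    calc Real.sqrt (‖z 0‖ ^ 2 + ‖z 1‖ ^ 2) ≤ Real.sqrt ((L₁ + L₂) ^ 2) := by
          apply Real.sqrt_le_sqrt
          nlinarith [norm_nonneg (z 0), norm_nonneg (z 1)]
      _ = L₁ + L₂ := Real.sqrt_sq (by positivity)
  -- eigenvalue parameters
  obtain ⟨lam, hlam⟩ : ∃ _v : ℝ, _v = Real.pi ^ 2 / L₁ ^ 2 + Real.pi ^ 2 / L₂ ^ 2 := ⟨_, rfl⟩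
  have hlampos : 0 < lam := by rw [hlam]; positivity
  have hdlampos : 0 < d * lam := mul_pos hd hlampos
  have hK0 : r + Real.log (1 - s) < d * lam := by
    have h1 : 1 - s < Real.exp (d * Real.pi ^ 2 * (L₁ ^ 2 + L₂ ^ 2) / (L₁ ^ 2 * L₂ ^ 2) - r) := by
      linarith
    have h2 : Real.log (1 - s) < d * Real.pi ^ 2 * (L₁ ^ 2 + L₂ ^ 2) / (L₁ ^ 2 * L₂ ^ 2) - r :=
      (Real.log_lt_iff_lt_exp hs').2 h1
    have h3 : d * Real.pi ^ 2 * (L₁ ^ 2 + L₂ ^ 2) / (L₁ ^ 2 * L₂ ^ 2) = d * lam := by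
      rw [hlam]
      field_simp
      ring
    linarith [h3 ▸ h2]
  obtain ⟨K0, hK0def⟩ : ∃ _v : ℝ, _v = r + Real.log (1 - s) := ⟨_, rfl⟩
  obtain ⟨τ, hτ⟩ : ∃ _v : ℝ, _v = (max K0 0 + d * lam) / (2 * (d * lam)) := ⟨_, rfl⟩
  have hτ0 : 0 < τ := by
    rw [hτ]
    apply div_pos
    · have := le_max_right K0 0
      linarith
    · linarith
  have hK0' : K0 < d * lam := hK0def ▸ hK0
  have hmaxlt : max K0 0 < d * lam := max_lt hK0' hdlampos
  have hτ1 : τ < 1 := by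
    rw [hτ, div_lt_one (by linarith)]
    linarith
  have hdτ : K0 < d * (τ * lam) := by
    have heq : d * (τ * lam) = (max K0 0 + d * lam) / 2 := by
      rw [hτ]
      field_simp
    rw [heq]
    have := le_max_left K0 0
    linarith
  obtain ⟨θ, hθ⟩ : ∃ _v : ℝ, _v = Real.sqrt τ := ⟨_, rfl⟩
  have hθ0 : 0 < θ := by rw [hθ]; exact Real.sqrt_pos.2 hτ0
  have hθ1 : θ < 1 := by
    rw [hθ]
    have h := Real.sqrt_lt_sqrt hτ0.le hτ1
    simpa using h
  have hθsq : θ ^ 2 = τ := by rw [hθ]; exact Real.sq_sqrt hτ0.le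
  obtain ⟨α, hα⟩ : ∃ _v : ℝ, _v = θ * Real.pi / L₁ := ⟨_, rfl⟩
  obtain ⟨β, hβ⟩ : ∃ _v : ℝ, _v = θ * Real.pi / L₂ := ⟨_, rfl⟩
  have hαpos : 0 < α := by rw [hα]; positivity
  have hβpos : 0 < β := by rw [hβ]; positivity
  have hσeq : α ^ 2 + β ^ 2 = τ * lam := by
    rw [hα, hβ, hlam, ← hθsq]
    field_simp
  obtain ⟨c₁, hc₁⟩ : ∃ _v : ℝ, _v = -(α * L₁ / 2) := ⟨_, rfl⟩
  obtain ⟨c₂, hc₂⟩ : ∃ _v : ℝ, _v = -(β * L₂ / 2) := ⟨_, rfl⟩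
  obtain ⟨μ, hμ⟩ : ∃ _v : ℝ, _v = r - d * (α ^ 2 + β ^ 2) := ⟨_, rfl⟩
  obtain ⟨ρ, hρ⟩ : ∃ _v : ℝ, _v = (1 - s) * Real.exp μ := ⟨_, rfl⟩
  have hρ0 : 0 < ρ := hρ ▸ mul_pos hs' (Real.exp_pos _)
  have hρ1 : ρ < 1 := by
    have hμlt : μ < -Real.log (1 - s) := by
      rw [hμ, hσeq]
      rw [hK0def] at hdτ
      linarith
    have h1 : Real.exp μ < Real.exp (-Real.log (1 - s)) := Real.exp_lt_exp.2 hμlt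
    have h2 : Real.exp (-Real.log (1 - s)) = (1 - s)⁻¹ := by
      rw [Real.exp_neg, Real.exp_log hs']
    rw [hρ]
    calc (1 - s) * Real.exp μ < (1 - s) * (1 - s)⁻¹ := by
          rw [← h2]; exact mul_lt_mul_of_pos_left h1 hs'
      _ = 1 := mul_inv_cancel₀ hs'.ne'
  obtain ⟨P, hP⟩ : ∃ _v : E2 → ℝ, _v = fun z => Real.cos (α * z 0 + c₁) * Real.cos (β * z 1 + c₂) := ⟨_, rfl⟩
  obtain ⟨c₀, hc₀⟩ : ∃ _v : ℝ, _v = Real.cos (θ * Real.pi / 2) := ⟨_, rfl⟩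
  have hc₀pos : 0 < c₀ := by
    rw [hc₀]
    apply Real.cos_pos_of_mem_Ioo
    refine Set.mem_Ioo.2 ⟨by nlinarith, by nlinarith⟩
  have hangle : θ * Real.pi / 2 ≤ Real.pi := by nlinarith
  -- bounds for P on the box
  have hcosbound : ∀ A m : ℝ, 0 ≤ m → m ≤ Real.pi → |A| ≤ m → Real.cos m ≤ Real.cos A := by
    intro A m hm0 hmπ hAm
    have h1 : Real.cos m ≤ Real.cos |A| :=
      Real.cos_le_cos_of_nonneg_of_le_pi (abs_nonneg A) hmπ hAm
    rwa [Real.cos_abs] at h1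
  have hPbounds : ∀ z ∈ Box, c₀ * c₀ ≤ P z ∧ P z ≤ 1 := by
    intro z hz
    simp only [hP]
    have hA : |α * z 0 + c₁| ≤ θ * Real.pi / 2 := by
      rw [hc₁, abs_le]
      have h1 : 0 ≤ z 0 := hz.1.1
      have h2 : z 0 ≤ L₁ := hz.1.2
      have hαL : α * L₁ = θ * Real.pi := by
        rw [hα]; field_simp
      constructor <;> nlinarith [mul_le_mul_of_nonneg_left h2 hαpos.le,
        mul_nonneg hαpos.le h1]
    have hB : |β * z 1 + c₂| ≤ θ * Real.pi / 2 := by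
      rw [hc₂, abs_le]
      have h1 : 0 ≤ z 1 := hz.2.1
      have h2 : z 1 ≤ L₂ := hz.2.2
      have hβL : β * L₂ = θ * Real.pi := by
        rw [hβ]; field_simp
      constructor <;> nlinarith [mul_le_mul_of_nonneg_left h2 hβpos.le,
        mul_nonneg hβpos.le h1]
    have hcA : c₀ ≤ Real.cos (α * z 0 + c₁) := hc₀ ▸ hcosbound _ _ (by positivity) hangle hA
    have hcB : c₀ ≤ Real.cos (β * z 1 + c₂) := hc₀ ▸ hcosbound _ _ (by positivity) hangle hB
    constructor
    · exact mul_le_mul hcA hcB hc₀pos.le (le_trans hc₀pos.le hcA)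
    · exact mul_le_one₀ (Real.cos_le_one _) (le_trans hc₀pos.le hcB) (Real.cos_le_one _)
  have hPposcl : ∀ z ∈ closure Ω, 0 ≤ P z := fun z hz =>
    le_trans (mul_nonneg hc₀pos.le hc₀pos.le) (hPbounds z (hclbox hz)).1
  -- bound on initial population
  have hxcl : x ∈ closure Ω := subset_closure hxΩ
  obtain ⟨z₀, hz₀cl, hz₀max⟩ := hcompact.exists_isMaxOn ⟨x, hxcl⟩ (sol.N_cont 0)
  obtain ⟨M₀, hM₀def⟩ : ∃ _v : ℝ, _v = sol.N 0 z₀ := ⟨_, rfl⟩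
  have hM₀0 : 0 ≤ M₀ := hM₀def ▸ sol.N_nonneg 0 z₀ hz₀cl
  obtain ⟨B, hBdef⟩ : ∃ _v : ℝ, _v = M₀ / (c₀ * c₀) := ⟨_, rfl⟩
  have hB0 : 0 ≤ B := hBdef ▸ div_nonneg hM₀0 (mul_nonneg hc₀pos.le hc₀pos.le)
  -- key inductive bound
  have key : ∀ m, ∀ y ∈ closure Ω, sol.N m y ≤ B * ρ ^ m * P y := by
    intro m
    induction m with
    | zero =>
      intro y hy
      have h1 : sol.N 0 y ≤ M₀ := hM₀def ▸ hz₀max hy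
      have h2 : M₀ = B * (c₀ * c₀) := by
        rw [hBdef, div_mul_cancel₀]
        exact (mul_pos hc₀pos hc₀pos).ne'
      have h3 : B * (c₀ * c₀) ≤ B * P y :=
        mul_le_mul_of_nonneg_left (hPbounds y (hclbox hy)).1 hB0
      calc sol.N 0 y ≤ M₀ := h1
        _ = B * (c₀ * c₀) := h2
        _ ≤ B * P y := h3
        _ = B * ρ ^ 0 * P y := by rw [pow_zero, mul_one]
    | succ m ih =>
      intro y hy
      have hCnn : 0 ≤ (1 - s) * (B * ρ ^ m) :=
        mul_nonneg hs'.le (mul_nonneg hB0 (pow_nonneg hρ0.le m))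
      have hinit : ∀ z ∈ Ω, sol.u m z 0 ≤ ((1 - s) * (B * ρ ^ m)) * P z := by
        intro z hz
        rw [sol.init m z hz]
        have := mul_le_mul_of_nonneg_left (ih z (subset_closure hz)) hs'.le
        calc (1 - s) * sol.N m z ≤ (1 - s) * (B * ρ ^ m * P z) := this
          _ = ((1 - s) * (B * ρ ^ m)) * P z := by ring
      have hseason := season_bound d r s hd hr Ω hΩopen hcompact sol α β c₁ c₂ P hP
        hPposcl μ hμ ((1 - s) * (B * ρ ^ m)) hCnn m hinit
      have h1 := hseason y hy 1 ⟨zero_le_one, le_refl 1⟩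
      rw [← sol.recur m y hy] at h1
      calc sol.N (m + 1) y ≤ ((1 - s) * (B * ρ ^ m)) * Real.exp (μ * 1) * P y := h1
        _ = B * ρ ^ (m + 1) * P y := by
            rw [mul_one, pow_succ, hρ]
            ring
  -- conclusion by squeezing
  have hle : ∀ m, sol.N m x ≤ B * ρ ^ m * P x := fun m => key m x hxcl
  have h0 : ∀ m, 0 ≤ sol.N m x := fun m => sol.N_nonneg m x hxcl
  have htend : Tendsto (fun m => B * ρ ^ m * P x) atTop (𝓝 0) := by
    have h1 : Tendsto (fun m : ℕ => ρ ^ m) atTop (𝓝 0) :=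
      tendsto_pow_atTop_nhds_zero_of_lt_one hρ0.le hρ1
    have h2 := (h1.const_mul B).mul_const (P x)
    simpa using h2
  exact squeeze_zero h0 hle htend
end
end
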